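/- Suppose s = −1. Then the line-graph adjacency matrix A_Λ is Hermitian, and every eigenvalue λ of A_Λ satisfies λ ≤ 2. -/

import Mathlib

open Finset Matrix Pointwise

/-- The adjacency matrix of the line graph of an oriented `𝕋^σ`-gain graph:
the `(e,f)` entry is `σ · conj (ω v e) · ω v f` when `e ≠ f` share the (unique)
common endpoint `v`, and `0` otherwise. -/
noncomputable def lineAdjMatrix {V : Type*} [Fintype V] [DecidableEq V]
    (Γ : SimpleGraph V) [DecidableRel Γ.Adj] (σ : ℂ) (ω : V → Sym2 V → ℂ) :
    Matrix Γ.edgeSet Γ.edgeSet ℂ :=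
  fun e f =>
    if e = f then 0
    else ∑ v : V, if v ∈ (e : Sym2 V) ∧ v ∈ (f : Sym2 V) then
      σ * (starRingEnd ℂ) (ω v (e : Sym2 V)) * ω v (f : Sym2 V) else 0

private lemma sum_inc_aux {V : Type*} [Fintype V] [DecidableEq V]
    (e : Sym2 V) (hne : ¬ e.IsDiag) (g : V → ℂ) (hg : ∀ v ∈ e, g v = 1) :
    (∑ v : V, if v ∈ e then g v else 0) = 2 := by
  induction e using Sym2.inductionOn with
  | hf a b =>
    rw [Sym2.mk_isDiag_iff] at hne
    have : ∀ v : V, (if v ∈ s(a, b) then g v else 0)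
        = (if v = a then g v else 0) + (if v = b then g v else 0) := by
      intro v
      by_cases h1 : v = a <;> by_cases h2 : v = b <;>
        simp_all [Sym2.mem_iff]
    rw [Finset.sum_congr rfl fun v _ => this v, Finset.sum_add_distrib,
      Finset.sum_ite_eq' _ a g, Finset.sum_ite_eq' _ b g]
    rw [hg a (by simp), hg b (by simp)]
    simp; norm_num
  
/-- For `σ = −1`, the line-graph adjacency matrix of an oriented
`𝕋^{-1}`-gain graph is Hermitian and all its eigenvalues are at most `2`. -/
theorem line_graph_eigenvalues_le_two
    {V : Type*} [Fintype V] [DecidableEq V]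
    (Γ : SimpleGraph V) [DecidableRel Γ.Adj]
    (ω : V → Sym2 V → ℂ)
    (hω : ∀ (v : V) (e : Sym2 V), e ∈ Γ.edgeSet → v ∈ e → ‖ω v e‖ = 1) :
    (lineAdjMatrix Γ (-1) ω).IsHermitian ∧
    ∀ μ : ℂ, μ ∈ spectrum ℂ (lineAdjMatrix Γ (-1) ω) → μ.im = 0 ∧ μ.re ≤ 2 := by
  classical
  set H : Matrix V Γ.edgeSet ℂ :=
    fun v e => if v ∈ (e : Sym2 V) then ω v (e : Sym2 V) else 0 with hH
  have key : lineAdjMatrix Γ (-1) ω = (2 : ℂ) • (1 : Matrix Γ.edgeSet Γ.edgeSet ℂ) - Hᴴ * H := by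
    ext e f
    have hent : (Hᴴ * H) e f = ∑ v : V, if v ∈ (e : Sym2 V) ∧ v ∈ (f : Sym2 V) then
        (starRingEnd ℂ) (ω v (e : Sym2 V)) * ω v (f : Sym2 V) else 0 := by
      simp only [Matrix.mul_apply, Matrix.conjTranspose_apply]; simp only [hH]
      refine Finset.sum_congr rfl fun v _ => ?_
      by_cases h1 : v ∈ (e : Sym2 V) <;> by_cases h2 : v ∈ (f : Sym2 V) <;>
        simp [h1, h2]
    by_cases hef : e = f
    · subst hef
      have h2 : (∑ v : V, if v ∈ (e : Sym2 V) ∧ v ∈ (e : Sym2 V) then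
          (starRingEnd ℂ) (ω v (e : Sym2 V)) * ω v (e : Sym2 V) else 0) = 2 := by
        have hsimp : ∀ v : V, (if v ∈ (e : Sym2 V) ∧ v ∈ (e : Sym2 V) then
            (starRingEnd ℂ) (ω v (e : Sym2 V)) * ω v (e : Sym2 V) else 0)
            = (if v ∈ (e : Sym2 V) then (starRingEnd ℂ) (ω v (e : Sym2 V)) * ω v (e : Sym2 V)
              else 0) := by
          intro v; by_cases h : v ∈ (e : Sym2 V) <;> simp [h]
        rw [Finset.sum_congr rfl fun v _ => hsimp v]
        refine sum_inc_aux _ (Γ.not_isDiag_of_mem_edgeSet e.2) _ fun v hv => ?_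
        have habs := hω v e e.2 hv
        rw [mul_comm, Complex.mul_conj, Complex.normSq_eq_norm_sq, habs]; norm_num
      simp only [lineAdjMatrix, Matrix.sub_apply, Matrix.smul_apply, Matrix.one_apply_eq,
        smul_eq_mul, mul_one, hent, h2, if_pos rfl]
      norm_num
    · simp only [lineAdjMatrix, if_neg hef, Matrix.sub_apply, Matrix.smul_apply,
        Matrix.one_apply_ne hef, smul_eq_mul, mul_zero, zero_sub, hent, ← Finset.sum_neg_distrib]
      refine Finset.sum_congr rfl fun v _ => ?_
      by_cases h : v ∈ (e : Sym2 V) ∧ v ∈ (f : Sym2 V) <;> simp [h]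
  have hBh : (Hᴴ * H).IsHermitian := Matrix.isHermitian_conjTranspose_mul_self H
  have hA : (lineAdjMatrix Γ (-1) ω).IsHermitian := by
    rw [key]
    refine Matrix.IsHermitian.sub ?_ hBh
    unfold Matrix.IsHermitian
    rw [Matrix.conjTranspose_smul, Matrix.conjTranspose_one]
    norm_num
  refine ⟨hA, fun μ hμ => ?_⟩
  have h2 : (2 : ℂ) - μ ∈ spectrum ℂ (Hᴴ * H) := by
    have hmem : (2 : ℂ) - μ ∈ ({(2:ℂ)} : Set ℂ) - spectrum ℂ (lineAdjMatrix Γ (-1) ω) :=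
      Set.sub_mem_sub rfl hμ
    rw [spectrum.singleton_sub_eq] at hmem
    have heq : (algebraMap ℂ (Matrix Γ.edgeSet Γ.edgeSet ℂ)) 2 - lineAdjMatrix Γ (-1) ω
        = Hᴴ * H := by
      rw [key, Algebra.algebraMap_eq_smul_one]
      exact sub_sub_cancel _ _
    rwa [heq] at hmem
  rw [hBh.spectral_theorem, Unitary.conjStarAlgAut_apply, Unitary.spectrum_star_right_conjugate, spectrum_diagonal] at h2
  obtain ⟨i, hi⟩ := h2
  have hnn : 0 ≤ hBh.eigenvalues i := Matrix.eigenvalues_conjTranspose_mul_self_nonneg H i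
  have hμeq : μ = 2 - (hBh.eigenvalues i : ℂ) := by
    simp only [Function.comp_apply] at hi
    have hi' : ((hBh.eigenvalues i : ℝ) : ℂ) = 2 - μ := by exact_mod_cast hi
    linear_combination hi'
  rw [hμeq]
  constructor <;> simp [hnn]
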